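/- Fix an integer N ≥ 2 and consider the polynomial ring ℂ[x_2,…,x_N, y_2,…,y_N, z] in 2N−1 variables. Let (P_{ab}) be the antisymmetric family of polynomials determined by: P(x_i,x_j) = (1/2)x_i x_j for i < j; P(y_i,y_j) = −(1/2)y_i y_j for i < j; P(z,x_i) = −(1/2)z x_i for all i; P(z,y_i) = (1/2)z y_i for all i; P(x_i,y_j) = (1/2)x_i y_j for i ≠ j; and P(x_i,y_i) = −Σ_{l=i+1}^{N} x_l y_l − (1/2)z² for all i. Then the associated bracket {f,g} = Σ_{a,b} P_{ab}·(∂f/∂x_a)·(∂g/∂x_b) satisfies the Jacobi identity {f,{g,h}} + {g,{h,f}} + {h,{f,g}} = 0 for all polynomials f, g, h, i.e. it is a Poisson bracket. (This is the Poisson structure of §5.4 of the paper: the restriction of the standard Poisson structure on the B-type compact Hermitian symmetric space to its open Schubert cell, the quasiclassical limit of odd-dimensional quantum Euclidean space.) -/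

import Mathlib

open MvPolynomial

/-- The bracket on a multivariate polynomial ring associated to a family of
polynomials `P a b`: `{f, g} = Σ_{a,b} P a b · ∂f/∂x_a · ∂g/∂x_b`. -/
noncomputable def polyBracket {σ : Type*} [Fintype σ]
    (P : σ → σ → MvPolynomial σ ℂ) (f g : MvPolynomial σ ℂ) : MvPolynomial σ ℂ :=
  ∑ a : σ, ∑ b : σ, P a b * pderiv a f * pderiv b g

namespace StmtB

/-- Index set for the variables `x_2, …, x_N, y_2, …, y_N, z` (with `m = N - 1`):
`Sum.inl (Sum.inl i)` is `x_{i+2}`, `Sum.inl (Sum.inr i)` is `y_{i+2}`, and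
`Sum.inr ()` is `z`. -/
abbrev Idx (m : ℕ) := (Fin m ⊕ Fin m) ⊕ Unit

variable {m : ℕ}

noncomputable def x (i : Fin m) : MvPolynomial (Idx m) ℂ := X (Sum.inl (Sum.inl i))

noncomputable def y (i : Fin m) : MvPolynomial (Idx m) ℂ := X (Sum.inl (Sum.inr i))

noncomputable def z : MvPolynomial (Idx m) ℂ := X (Sum.inr ())

/-- `sg i j` is the sign of `j - i`. -/
def sg (i j : Fin m) : ℂ := if i < j then 1 else if j < i then -1 else 0

/-- The antisymmetric family of polynomials determined by:
`P(x_i,x_j) = (1/2)x_i x_j` for `i < j`; `P(y_i,y_j) = -(1/2)y_i y_j` for `i < j`;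
`P(z,x_i) = -(1/2)z x_i`; `P(z,y_i) = (1/2)z y_i`; `P(x_i,y_j) = (1/2)x_i y_j` for
`i ≠ j`; and `P(x_i,y_i) = -Σ_{l>i} x_l y_l - (1/2)z²`. -/
noncomputable def P : Idx m → Idx m → MvPolynomial (Idx m) ℂ
  | Sum.inl (Sum.inl i), Sum.inl (Sum.inl j) => C (sg i j * (1/2)) * x i * x j
  | Sum.inl (Sum.inr i), Sum.inl (Sum.inr j) => -(C (sg i j * (1/2)) * y i * y j)
  | Sum.inl (Sum.inl i), Sum.inl (Sum.inr j) =>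
      if i = j then -(∑ l ∈ Finset.Ioi i, x l * y l) - C (1/2) * z ^ 2
      else C (1/2) * x i * y j
  | Sum.inl (Sum.inr j), Sum.inl (Sum.inl i) =>
      -(if i = j then -(∑ l ∈ Finset.Ioi i, x l * y l) - C (1/2) * z ^ 2
        else C (1/2) * x i * y j)
  | Sum.inr _, Sum.inl (Sum.inl i) => -(C (1/2) * z * x i)
  | Sum.inl (Sum.inl i), Sum.inr _ => C (1/2) * x i * z
  | Sum.inr _, Sum.inl (Sum.inr i) => C (1/2) * z * y i
  | Sum.inl (Sum.inr i), Sum.inr _ => -(C (1/2) * y i * z)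
  | Sum.inr _, Sum.inr _ => 0

end StmtB

namespace PB

variable {σ : Type*} [Fintype σ] (P : σ → σ → MvPolynomial σ ℂ)

theorem add_right (f g h : MvPolynomial σ ℂ) :
    polyBracket P f (g + h) = polyBracket P f g + polyBracket P f h := by
  unfold polyBracket
  rw [← Finset.sum_add_distrib]
  refine Finset.sum_congr rfl fun a _ => ?_
  rw [← Finset.sum_add_distrib]
  refine Finset.sum_congr rfl fun b _ => ?_
  rw [map_add]; ring

theorem add_left (f g h : MvPolynomial σ ℂ) :
    polyBracket P (f + g) h = polyBracket P f h + polyBracket P g h := by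
  unfold polyBracket
  rw [← Finset.sum_add_distrib]
  refine Finset.sum_congr rfl fun a _ => ?_
  rw [← Finset.sum_add_distrib]
  refine Finset.sum_congr rfl fun b _ => ?_
  rw [map_add]; ring

theorem C_right (f : MvPolynomial σ ℂ) (r : ℂ) : polyBracket P f (C r) = 0 := by
  unfold polyBracket
  refine Finset.sum_eq_zero fun a _ => Finset.sum_eq_zero fun b _ => ?_
  rw [pderiv_C, mul_zero]

theorem C_left (f : MvPolynomial σ ℂ) (r : ℂ) : polyBracket P (C r) f = 0 := by
  unfold polyBracket
  refine Finset.sum_eq_zero fun a _ => Finset.sum_eq_zero fun b _ => ?_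
  rw [pderiv_C, mul_zero, zero_mul]

theorem one_right (f : MvPolynomial σ ℂ) : polyBracket P f 1 = 0 := by
  simpa using C_right P f 1

theorem zero_right (f : MvPolynomial σ ℂ) : polyBracket P f 0 = 0 := by
  simpa using C_right P f 0

theorem zero_left (f : MvPolynomial σ ℂ) : polyBracket P 0 f = 0 := by
  simpa using C_left P f 0

theorem mul_right (f g h : MvPolynomial σ ℂ) :
    polyBracket P f (g * h) = g * polyBracket P f h + h * polyBracket P f g := by
  unfold polyBracket
  rw [Finset.mul_sum, Finset.mul_sum, ← Finset.sum_add_distrib]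
  refine Finset.sum_congr rfl fun a _ => ?_
  rw [Finset.mul_sum, Finset.mul_sum, ← Finset.sum_add_distrib]
  refine Finset.sum_congr rfl fun b _ => ?_
  rw [pderiv_mul]; ring

theorem mul_left (f g h : MvPolynomial σ ℂ) :
    polyBracket P (f * g) h = f * polyBracket P g h + g * polyBracket P f h := by
  unfold polyBracket
  rw [Finset.mul_sum, Finset.mul_sum, ← Finset.sum_add_distrib]
  refine Finset.sum_congr rfl fun a _ => ?_
  rw [Finset.mul_sum, Finset.mul_sum, ← Finset.sum_add_distrib]
  refine Finset.sum_congr rfl fun b _ => ?_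
  rw [pderiv_mul]; ring

theorem neg_right (f g : MvPolynomial σ ℂ) :
    polyBracket P f (-g) = -polyBracket P f g := by
  have h := add_right P f g (-g)
  rw [add_neg_cancel, zero_right] at h
  linear_combination -h

theorem X_X [DecidableEq σ] (a b : σ) : polyBracket P (X a) (X b) = P a b := by
  unfold polyBracket
  rw [Finset.sum_eq_single a]
  · rw [Finset.sum_eq_single b]
    · simp [pderiv_X_self]
    · intro c _ hc; rw [pderiv_X_of_ne (Ne.symm hc)]; simp
    · simp
  · intro c _ hc
    refine Finset.sum_eq_zero fun d _ => ?_
    rw [pderiv_X_of_ne (Ne.symm hc)]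
    simp
  · simp

theorem sum_right {ι : Type*} (s : Finset ι) (f : MvPolynomial σ ℂ) (F : ι → MvPolynomial σ ℂ) :
    polyBracket P f (∑ i ∈ s, F i) = ∑ i ∈ s, polyBracket P f (F i) := by
  classical
  induction s using Finset.induction_on with
  | empty => simpa using zero_right P f
  | insert _ _ h ih => rw [Finset.sum_insert h, Finset.sum_insert h, add_right, ih]

theorem antisymm (hP : ∀ a b, P b a = -P a b) (f g : MvPolynomial σ ℂ) :
    polyBracket P g f = -polyBracket P f g := by
  unfold polyBracket
  rw [Finset.sum_comm, ← Finset.sum_neg_distrib]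
  refine Finset.sum_congr rfl fun a _ => ?_
  rw [← Finset.sum_neg_distrib]
  refine Finset.sum_congr rfl fun b _ => ?_
  rw [hP a b]; ring

end PB

namespace PB

variable {σ : Type*} [Fintype σ] (P : σ → σ → MvPolynomial σ ℂ)

noncomputable def J (f g h : MvPolynomial σ ℂ) : MvPolynomial σ ℂ :=
  polyBracket P f (polyBracket P g h) + polyBracket P g (polyBracket P h f) +
    polyBracket P h (polyBracket P f g)

theorem J_cyc (f g h : MvPolynomial σ ℂ) : J P f g h = J P g h f := by
  unfold J; ring

theorem J_add3 (f g h₁ h₂ : MvPolynomial σ ℂ) :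
    J P f g (h₁ + h₂) = J P f g h₁ + J P f g h₂ := by
  unfold J
  rw [add_right, add_right, add_left, add_right, add_left]
  ring

theorem J_add2 (f g₁ g₂ h : MvPolynomial σ ℂ) :
    J P f (g₁ + g₂) h = J P f g₁ h + J P f g₂ h := by
  rw [J_cyc, J_cyc, J_add3, J_cyc P h f g₁, J_cyc P h f g₂]

theorem J_add1 (f₁ f₂ g h : MvPolynomial σ ℂ) :
    J P (f₁ + f₂) g h = J P f₁ g h + J P f₂ g h := by
  rw [J_cyc, J_add3, ← J_cyc P f₁, ← J_cyc P f₂]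

theorem J_C3 (f g : MvPolynomial σ ℂ) (r : ℂ) : J P f g (C r) = 0 := by
  unfold J
  rw [C_right P g r, C_left P f r, C_left P (polyBracket P f g) r, zero_right, zero_right]
  ring

theorem J_C2 (f h : MvPolynomial σ ℂ) (r : ℂ) : J P f (C r) h = 0 := by
  rw [J_cyc, J_cyc, J_C3]

theorem J_C1 (g h : MvPolynomial σ ℂ) (r : ℂ) : J P (C r) g h = 0 := by
  rw [J_cyc, J_C3]

theorem J_mul2 (hP : ∀ a b, P b a = -P a b) (f g₁ g₂ h : MvPolynomial σ ℂ) :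
    J P f (g₁ * g₂) h = g₁ * J P f g₂ h + g₂ * J P f g₁ h := by
  unfold J
  simp only [mul_left, mul_right, add_left, add_right]
  rw [antisymm P hP g₁ h, antisymm P hP g₂ h]
  ring

theorem J_mul3 (hP : ∀ a b, P b a = -P a b) (f g h₁ h₂ : MvPolynomial σ ℂ) :
    J P f g (h₁ * h₂) = h₁ * J P f g h₂ + h₂ * J P f g h₁ := by
  rw [J_cyc, J_mul2 P hP, ← J_cyc P f g h₂, ← J_cyc P f g h₁]

theorem J_eq_zero [DecidableEq σ] (hP : ∀ a b, P b a = -P a b)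
    (hgen : ∀ a b c, J P (X a) (X b) (X c) = 0) (f g h : MvPolynomial σ ℂ) :
    J P f g h = 0 := by
  have h3 : ∀ a b (h : MvPolynomial σ ℂ), J P (X a) (X b) h = 0 := by
    intro a b h
    induction h using MvPolynomial.induction_on with
    | C r => exact J_C3 P _ _ r
    | add p q hp hq => rw [J_add3, hp, hq, add_zero]
    | mul_X p n hp => rw [J_mul3 P hP, hp, hgen, mul_zero, mul_zero, add_zero]
  have h2 : ∀ a (g h : MvPolynomial σ ℂ), J P (X a) g h = 0 := by
    intro a g h
    induction g using MvPolynomial.induction_on with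
    | C r => exact J_C2 P _ _ r
    | add p q hp hq => rw [J_add2, hp, hq, add_zero]
    | mul_X p n hp => rw [J_mul2 P hP, hp, h3, mul_zero, mul_zero, add_zero]
  induction f using MvPolynomial.induction_on with
  | C r => exact J_C1 P _ _ r
  | add p q hp hq => rw [J_add1, hp, hq, add_zero]
  | mul_X p n hp =>
      rw [J_cyc, J_mul3 P hP, ← J_cyc P (X n) g h, ← J_cyc P p g h, hp, h2, mul_zero,
        mul_zero, add_zero]

end PB

namespace PB

variable {σ : Type*} [Fintype σ] (P : σ → σ → MvPolynomial σ ℂ)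

theorem sub_right (f g h : MvPolynomial σ ℂ) :
    polyBracket P f (g - h) = polyBracket P f g - polyBracket P f h := by
  rw [sub_eq_add_neg, add_right, neg_right, sub_eq_add_neg]

theorem Cmul_right (r : ℂ) (f g : MvPolynomial σ ℂ) :
    polyBracket P f (C r * g) = C r * polyBracket P f g := by
  rw [mul_right, C_right, mul_zero, add_zero]

theorem smul_eq {Q : σ → σ → MvPolynomial σ ℂ} (r : ℂ) (hPQ : ∀ a b, P a b = C r * Q a b)
    (f g : MvPolynomial σ ℂ) : polyBracket P f g = C r * polyBracket Q f g := by
  unfold polyBracket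
  rw [Finset.mul_sum]
  refine Finset.sum_congr rfl fun a _ => ?_
  rw [Finset.mul_sum]
  refine Finset.sum_congr rfl fun b _ => ?_
  rw [hPQ]; ring

end PB

namespace StmtB

variable {m : ℕ}

theorem sg_self (i : Fin m) : sg i i = 0 := by simp [sg]

theorem sg_of_lt {i j : Fin m} (h : i < j) : sg i j = 1 := by simp [sg, h]

theorem sg_of_gt {i j : Fin m} (h : j < i) : sg i j = -1 := by
  have : ¬ i < j := by omega
  simp [sg, this, h]

theorem sg_antisymm (i j : Fin m) : sg j i = -sg i j := by
  rcases lt_trichotomy i j with h | h | h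
  · rw [sg_of_lt h, sg_of_gt h]
  · subst h; simp [sg_self]
  · rw [sg_of_gt h, sg_of_lt h]; norm_num

/-- `2 * T i + z²`, i.e. `-2 P(x_i, y_i)`. -/
noncomputable def S2 (i : Fin m) : MvPolynomial (Idx m) ℂ :=
  -(2 * ∑ l ∈ Finset.Ioi i, x l * y l) - z ^ 2

/-- Integer-coefficient version of `P`: `Q a b = 2 P a b`. -/
noncomputable def Q : Idx m → Idx m → MvPolynomial (Idx m) ℂ
  | Sum.inl (Sum.inl i), Sum.inl (Sum.inl j) => C (sg i j) * (x i * x j)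
  | Sum.inl (Sum.inr i), Sum.inl (Sum.inr j) => -(C (sg i j) * (y i * y j))
  | Sum.inl (Sum.inl i), Sum.inl (Sum.inr j) => if i = j then S2 i else x i * y j
  | Sum.inl (Sum.inr j), Sum.inl (Sum.inl i) => -(if i = j then S2 i else x i * y j)
  | Sum.inr _, Sum.inl (Sum.inl i) => -(z * x i)
  | Sum.inl (Sum.inl i), Sum.inr _ => x i * z
  | Sum.inr _, Sum.inl (Sum.inr i) => z * y i
  | Sum.inl (Sum.inr i), Sum.inr _ => -(y i * z)
  | Sum.inr _, Sum.inr _ => 0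

theorem half2 : (C ((1:ℂ)/2) : MvPolynomial (Idx m) ℂ) * 2 = 1 := by
  rw [show ((2:MvPolynomial (Idx m) ℂ)) = C 2 from (map_ofNat C 2).symm, ← C_mul]
  norm_num

theorem P_eq (a b : Idx m) : P a b = C ((1:ℂ)/2) * Q a b := by
  rcases a with (i | i) | u <;> rcases b with (j | j) | v <;> simp only [P, Q] <;>
    try ring
  · rw [C_mul]; ring
  · split_ifs with h
    · subst h
      rw [S2]
      linear_combination (∑ l ∈ Finset.Ioi i, x l * y l) * (half2 (m := m))
    · ring
  · split_ifs with h
    · subst h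
      rw [S2]
      linear_combination (-(∑ l ∈ Finset.Ioi j, x l * y l)) * (half2 (m := m))
    · ring
  · rw [C_mul]; ring

theorem Q_antisymm (a b : Idx m) : Q b a = -Q a b := by
  rcases a with (i | i) | u <;> rcases b with (j | j) | v <;> simp only [Q] <;>
    try ring
  · rw [sg_antisymm]; rw [map_neg]; ring
  · rw [sg_antisymm]; rw [map_neg]; ring

theorem P_antisymm (a b : Idx m) : P b a = -P a b := by
  rw [P_eq, P_eq, Q_antisymm]; ring

theorem Q_diag (a : Idx m) : Q a a = 0 := by
  rcases a with (i | i) | u <;> simp [Q, sg_self]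

end StmtB

namespace StmtB

variable {m : ℕ}

theorem foldX (i : Fin m) : (X (Sum.inl (Sum.inl i)) : MvPolynomial (Idx m) ℂ) = x i := rfl
theorem foldY (i : Fin m) : (X (Sum.inl (Sum.inr i)) : MvPolynomial (Idx m) ℂ) = y i := rfl
theorem foldZ : (X (Sum.inr ()) : MvPolynomial (Idx m) ℂ) = z := rfl

theorem Qxx (i j : Fin m) : polyBracket Q (x i) (x j) = C (sg i j) * (x i * x j) :=
  PB.X_X Q _ _

theorem Qyy (i j : Fin m) : polyBracket Q (y i) (y j) = -(C (sg i j) * (y i * y j)) :=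
  PB.X_X Q _ _

theorem Qxy (i j : Fin m) :
    polyBracket Q (x i) (y j) = if i = j then S2 i else x i * y j :=
  PB.X_X Q _ _

theorem Qyx (i j : Fin m) :
    polyBracket Q (y j) (x i) = -(if i = j then S2 i else x i * y j) :=
  PB.X_X Q _ _

theorem Qxz (i : Fin m) : polyBracket Q (x i) z = x i * z := PB.X_X Q _ _
theorem Qzx (i : Fin m) : polyBracket Q z (x i) = -(z * x i) := PB.X_X Q _ _
theorem Qyz (i : Fin m) : polyBracket Q (y i) z = -(y i * z) := PB.X_X Q _ _
theorem Qzy (i : Fin m) : polyBracket Q z (y i) = z * y i := PB.X_X Q _ _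
theorem Qzz : polyBracket Q (z (m := m)) z = 0 := PB.X_X Q _ _

theorem QxS2 (j i : Fin m) :
    polyBracket Q (x j) (S2 i) = if j ≤ i then 2 * (x j * S2 i) else 0 := by
  have hS2 : S2 i = -((∑ l ∈ Finset.Ioi i, x l * y l) + ∑ l ∈ Finset.Ioi i, x l * y l)
      - z * z := by rw [S2]; ring
  have hz2 : polyBracket Q (x j) (z * z) = 2 * (x j * (z * z)) := by
    rw [PB.mul_right, Qxz]; ring
  have hT : ∀ l : Fin m, polyBracket Q (x j) (x l * y l) =
      x l * (if j = l then S2 j else x j * y l) + y l * (C (sg j l) * (x j * x l)) := by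
    intro l; rw [PB.mul_right, Qxx, Qxy]
  rw [hS2, PB.sub_right, PB.neg_right, PB.add_right, PB.sum_right, hz2]
  by_cases hji : j ≤ i
  · rw [if_pos hji]
    have hsum : ∑ l ∈ Finset.Ioi i, polyBracket Q (x j) (x l * y l)
        = ∑ l ∈ Finset.Ioi i, (x j + x j) * (x l * y l) := by
      refine Finset.sum_congr rfl fun l hl => ?_
      have hjl : j < l := lt_of_le_of_lt hji (Finset.mem_Ioi.mp hl)
      rw [hT l, if_neg hjl.ne, sg_of_lt hjl, C_1]; ring
    rw [hsum, ← Finset.mul_sum]; ring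
  · rw [if_neg hji]
    have hij : i < j := by omega
    have hjmem : j ∈ Finset.Ioi i := Finset.mem_Ioi.mpr hij
    rw [← Finset.add_sum_erase _ _ hjmem]
    have hsum : ∑ l ∈ (Finset.Ioi i).erase j, polyBracket Q (x j) (x l * y l)
        = ∑ l ∈ Finset.Ioi j, (x j + x j) * (x l * y l) := by
      rw [show Finset.Ioi j = ((Finset.Ioi i).erase j).filter (fun l => j < l) by
        ext a; simp only [Finset.mem_Ioi, Finset.mem_filter, Finset.mem_erase]; omega]
      rw [Finset.sum_filter]
      refine Finset.sum_congr rfl fun l hl => ?_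
      have hlj : l ≠ j := (Finset.mem_erase.mp hl).1
      rw [hT l]
      rcases lt_trichotomy j l with h | h | h
      · rw [if_pos h, if_neg (Ne.symm hlj), sg_of_lt h, C_1]; ring
      · exact absurd h.symm hlj
      · rw [if_neg (by omega : ¬ j < l), if_neg (Ne.symm hlj), sg_of_gt h, map_neg, C_1]; ring
    rw [hsum, ← Finset.mul_sum, hT j, if_pos rfl, sg_self, C_0, S2]
    ring

theorem QyS2 (j i : Fin m) :
    polyBracket Q (y j) (S2 i) = if j ≤ i then -(2 * (y j * S2 i)) else 0 := by
  have hS2 : S2 i = -((∑ l ∈ Finset.Ioi i, x l * y l) + ∑ l ∈ Finset.Ioi i, x l * y l)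
      - z * z := by rw [S2]; ring
  have hz2 : polyBracket Q (y j) (z * z) = -(2 * (y j * (z * z))) := by
    rw [PB.mul_right, Qyz]; ring
  have hT : ∀ l : Fin m, polyBracket Q (y j) (x l * y l) =
      x l * (-(C (sg j l) * (y j * y l))) + y l * (-(if l = j then S2 l else x l * y j)) := by
    intro l; rw [PB.mul_right, Qyy, Qyx]
  rw [hS2, PB.sub_right, PB.neg_right, PB.add_right, PB.sum_right, hz2]
  by_cases hji : j ≤ i
  · rw [if_pos hji]
    have hsum : ∑ l ∈ Finset.Ioi i, polyBracket Q (y j) (x l * y l)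
        = ∑ l ∈ Finset.Ioi i, -((y j + y j) * (x l * y l)) := by
      refine Finset.sum_congr rfl fun l hl => ?_
      have hjl : j < l := lt_of_le_of_lt hji (Finset.mem_Ioi.mp hl)
      rw [hT l, if_neg hjl.ne', sg_of_lt hjl, C_1]; ring
    rw [hsum, Finset.sum_neg_distrib, ← Finset.mul_sum]; ring
  · rw [if_neg hji]
    have hij : i < j := by omega
    have hjmem : j ∈ Finset.Ioi i := Finset.mem_Ioi.mpr hij
    rw [← Finset.add_sum_erase _ _ hjmem]
    have hsum : ∑ l ∈ (Finset.Ioi i).erase j, polyBracket Q (y j) (x l * y l)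
        = ∑ l ∈ Finset.Ioi j, -((y j + y j) * (x l * y l)) := by
      rw [show Finset.Ioi j = ((Finset.Ioi i).erase j).filter (fun l => j < l) by
        ext a; simp only [Finset.mem_Ioi, Finset.mem_filter, Finset.mem_erase]; omega]
      rw [Finset.sum_filter]
      refine Finset.sum_congr rfl fun l hl => ?_
      have hlj : l ≠ j := (Finset.mem_erase.mp hl).1
      rw [hT l]
      rcases lt_trichotomy j l with h | h | h
      · rw [if_pos h, if_neg hlj, sg_of_lt h, C_1]; ring
      · exact absurd h.symm hlj
      · rw [if_neg (by omega : ¬ j < l), if_neg hlj, sg_of_gt h, map_neg, C_1]; ring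
    rw [hsum, Finset.sum_neg_distrib, ← Finset.mul_sum, hT j, if_pos rfl, sg_self, C_0, S2]
    ring

theorem QzS2 (i : Fin m) : polyBracket Q (z (m := m)) (S2 i) = 0 := by
  have hS2 : S2 i = -((∑ l ∈ Finset.Ioi i, x l * y l) + ∑ l ∈ Finset.Ioi i, x l * y l)
      - z * z := by rw [S2]; ring
  rw [hS2, PB.sub_right, PB.neg_right, PB.add_right, PB.sum_right, PB.mul_right, Qzz]
  have hsum : ∑ l ∈ Finset.Ioi i, polyBracket Q z (x l * y l) = 0 := by
    refine Finset.sum_eq_zero fun l _ => ?_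
    rw [PB.mul_right, Qzx, Qzy]; ring
  rw [hsum]; ring

end StmtB

namespace StmtB

variable {m : ℕ}

abbrev ix (i : Fin m) : Idx m := Sum.inl (Sum.inl i)
abbrev iy (i : Fin m) : Idx m := Sum.inl (Sum.inr i)
abbrev iz : Idx m := Sum.inr ()

theorem Q_xx (i j : Fin m) : Q (ix i) (ix j) = C (sg i j) * (x i * x j) := rfl
theorem Q_yy (i j : Fin m) : Q (iy i) (iy j) = -(C (sg i j) * (y i * y j)) := rfl
theorem Q_xy (i j : Fin m) : Q (ix i) (iy j) = if i = j then S2 i else x i * y j := rfl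
theorem Q_yx (i j : Fin m) :
    Q (iy i) (ix j) = -(if j = i then S2 j else x j * y i) := rfl
theorem Q_zx (i : Fin m) : Q iz (ix i) = -(z * x i) := rfl
theorem Q_xz (i : Fin m) : Q (ix i) iz = x i * z := rfl
theorem Q_zy (i : Fin m) : Q iz (iy i) = z * y i := rfl
theorem Q_yz (i : Fin m) : Q (iy i) iz = -(y i * z) := rfl
theorem Q_zz : Q (iz (m := m)) iz = 0 := rfl

theorem foldX' (i : Fin m) : (X (ix i) : MvPolynomial (Idx m) ℂ) = x i := rfl
theorem foldY' (i : Fin m) : (X (iy i) : MvPolynomial (Idx m) ℂ) = y i := rfl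
theorem foldZ' : (X (iz (m := m)) : MvPolynomial (Idx m) ℂ) = z := rfl

/-- The Jacobiator of `Q` on generators. -/
noncomputable def JQ (a b c : Idx m) : MvPolynomial (Idx m) ℂ :=
  polyBracket Q (X a) (Q b c) + polyBracket Q (X b) (Q c a) + polyBracket Q (X c) (Q a b)

theorem JQ_cyc (a b c : Idx m) : JQ a b c = JQ b c a := by unfold JQ; ring

theorem JQ_swap (a b c : Idx m) : JQ a c b = -JQ a b c := by
  unfold JQ
  rw [Q_antisymm b c, Q_antisymm a b, Q_antisymm c a, PB.neg_right, PB.neg_right,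
    PB.neg_right]
  ring

theorem JQ_abb (a b : Idx m) : JQ a b b = 0 := by
  unfold JQ
  rw [Q_diag, PB.zero_right, Q_antisymm a b, PB.neg_right]
  ring

theorem JQ_aab (a b : Idx m) : JQ a a b = 0 := by
  unfold JQ
  rw [Q_diag, PB.zero_right, Q_antisymm a b, PB.neg_right]
  ring

theorem JQ_aba (a b : Idx m) : JQ a b a = 0 := by rw [JQ_cyc, JQ_abb]

theorem jq_xxx (i j k : Fin m) : JQ (ix i) (ix j) (ix k) = 0 := by
  unfold JQ
  simp only [Q_xx, Q_yy, Q_xy, Q_yx, Q_zx, Q_xz, Q_zy, Q_yz, Q_zz, foldX', foldY', foldZ',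
    PB.mul_right, PB.add_right, PB.C_right, PB.neg_right, PB.zero_right, PB.one_right,
    Qxx, Qyy, Qxy, Qyx, Qxz, Qzx, Qyz, Qzy, Qzz, QxS2, QyS2, QzS2,
    eq_self_iff_true, ite_true, ite_false, if_true, if_false, mul_zero, zero_mul,
    add_zero, zero_add, neg_zero, neg_neg, sg_self, map_zero, map_one, map_neg, le_refl]
  simp only [sg_antisymm i j, sg_antisymm i k, sg_antisymm j k, map_neg]
  ring

theorem jq_yyy (i j k : Fin m) : JQ (iy i) (iy j) (iy k) = 0 := by
  unfold JQ
  simp only [Q_xx, Q_yy, Q_xy, Q_yx, Q_zx, Q_xz, Q_zy, Q_yz, Q_zz, foldX', foldY', foldZ',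
    PB.mul_right, PB.add_right, PB.C_right, PB.neg_right, PB.zero_right, PB.one_right,
    Qxx, Qyy, Qxy, Qyx, Qxz, Qzx, Qyz, Qzy, Qzz, QxS2, QyS2, QzS2,
    eq_self_iff_true, ite_true, ite_false, if_true, if_false, mul_zero, zero_mul,
    add_zero, zero_add, neg_zero, neg_neg, sg_self, map_zero, map_one, map_neg, le_refl]
  simp only [sg_antisymm i j, sg_antisymm i k, sg_antisymm j k, map_neg]
  ring

theorem jq_xxz (i j : Fin m) : JQ (ix i) (ix j) iz = 0 := by
  unfold JQ
  simp only [Q_xx, Q_yy, Q_xy, Q_yx, Q_zx, Q_xz, Q_zy, Q_yz, Q_zz, foldX', foldY', foldZ',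
    PB.mul_right, PB.add_right, PB.C_right, PB.neg_right, PB.zero_right, PB.one_right,
    Qxx, Qyy, Qxy, Qyx, Qxz, Qzx, Qyz, Qzy, Qzz, QxS2, QyS2, QzS2,
    eq_self_iff_true, ite_true, ite_false, if_true, if_false, mul_zero, zero_mul,
    add_zero, zero_add, neg_zero, neg_neg, sg_self, map_zero, map_one, map_neg, le_refl]
  simp only [sg_antisymm i j, map_neg]
  ring

theorem jq_yyz (i j : Fin m) : JQ (iy i) (iy j) iz = 0 := by
  unfold JQ
  simp only [Q_xx, Q_yy, Q_xy, Q_yx, Q_zx, Q_xz, Q_zy, Q_yz, Q_zz, foldX', foldY', foldZ',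
    PB.mul_right, PB.add_right, PB.C_right, PB.neg_right, PB.zero_right, PB.one_right,
    Qxx, Qyy, Qxy, Qyx, Qxz, Qzx, Qyz, Qzy, Qzz, QxS2, QyS2, QzS2,
    eq_self_iff_true, ite_true, ite_false, if_true, if_false, mul_zero, zero_mul,
    add_zero, zero_add, neg_zero, neg_neg, sg_self, map_zero, map_one, map_neg, le_refl]
  simp only [sg_antisymm i j, map_neg]
  ring

theorem jq_xyz (i j : Fin m) : JQ (ix i) (iy j) iz = 0 := by
  unfold JQ
  by_cases hij : i = j
  · simp only [hij, Q_xx, Q_yy, Q_xy, Q_yx, Q_zx, Q_xz, Q_zy, Q_yz, Q_zz, foldX', foldY', foldZ',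
    PB.mul_right, PB.add_right, PB.C_right, PB.neg_right, PB.zero_right, PB.one_right,
    Qxx, Qyy, Qxy, Qyx, Qxz, Qzx, Qyz, Qzy, Qzz, QxS2, QyS2, QzS2,
    eq_self_iff_true, ite_true, ite_false, if_true, if_false, mul_zero, zero_mul,
    add_zero, zero_add, neg_zero, neg_neg, sg_self, map_zero, map_one, map_neg, le_refl]
    ring
  · simp only [hij, Ne.symm hij, Q_xx, Q_yy, Q_xy, Q_yx, Q_zx, Q_xz, Q_zy, Q_yz, Q_zz, foldX', foldY', foldZ',
    PB.mul_right, PB.add_right, PB.C_right, PB.neg_right, PB.zero_right, PB.one_right,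
    Qxx, Qyy, Qxy, Qyx, Qxz, Qzx, Qyz, Qzy, Qzz, QxS2, QyS2, QzS2,
    eq_self_iff_true, ite_true, ite_false, if_true, if_false, mul_zero, zero_mul,
    add_zero, zero_add, neg_zero, neg_neg, sg_self, map_zero, map_one, map_neg, le_refl]
    ring

theorem jq_xxy (i j k : Fin m) : JQ (ix i) (ix j) (iy k) = 0 := by
  unfold JQ
  by_cases hik : i = k <;> by_cases hjk : j = k
  · simp only [hik, hjk, Q_xx, Q_yy, Q_xy, Q_yx, Q_zx, Q_xz, Q_zy, Q_yz, Q_zz, foldX', foldY', foldZ',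
        PB.mul_right, PB.add_right, PB.C_right, PB.neg_right, PB.zero_right, PB.one_right,
        Qxx, Qyy, Qxy, Qyx, Qxz, Qzx, Qyz, Qzy, Qzz, QxS2, QyS2, QzS2,
        eq_self_iff_true, ite_true, ite_false, if_true, if_false, mul_zero, zero_mul,
        add_zero, zero_add, neg_zero, neg_neg, sg_self, map_zero, map_one, map_neg, le_refl]
    ring
  · -- i = k, j ≠ k
    rcases lt_trichotomy j k with h | h | h
    · simp only [hik, hjk, Ne.symm hjk, h.ne, h.ne', h.le,
        eq_false (by omega : ¬ k ≤ j), sg_of_lt h, sg_of_gt h, Q_xx, Q_yy, Q_xy, Q_yx, Q_zx, Q_xz, Q_zy, Q_yz, Q_zz, foldX', foldY', foldZ',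
        PB.mul_right, PB.add_right, PB.C_right, PB.neg_right, PB.zero_right, PB.one_right,
        Qxx, Qyy, Qxy, Qyx, Qxz, Qzx, Qyz, Qzy, Qzz, QxS2, QyS2, QzS2,
        eq_self_iff_true, ite_true, ite_false, if_true, if_false, mul_zero, zero_mul,
        add_zero, zero_add, neg_zero, neg_neg, sg_self, map_zero, map_one, map_neg, le_refl]
      ring
    · exact absurd h hjk
    · simp only [hik, hjk, Ne.symm hjk, h.ne, h.ne', h.le,
        eq_false (by omega : ¬ j ≤ k), sg_of_lt h, sg_of_gt h, Q_xx, Q_yy, Q_xy, Q_yx, Q_zx, Q_xz, Q_zy, Q_yz, Q_zz, foldX', foldY', foldZ',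
        PB.mul_right, PB.add_right, PB.C_right, PB.neg_right, PB.zero_right, PB.one_right,
        Qxx, Qyy, Qxy, Qyx, Qxz, Qzx, Qyz, Qzy, Qzz, QxS2, QyS2, QzS2,
        eq_self_iff_true, ite_true, ite_false, if_true, if_false, mul_zero, zero_mul,
        add_zero, zero_add, neg_zero, neg_neg, sg_self, map_zero, map_one, map_neg, le_refl]
      ring
  · -- j = k, i ≠ k
    rcases lt_trichotomy i k with h | h | h
    · simp only [hjk, hik, Ne.symm hik, h.ne, h.ne', h.le,
        eq_false (by omega : ¬ k ≤ i), sg_of_lt h, sg_of_gt h, Q_xx, Q_yy, Q_xy, Q_yx, Q_zx, Q_xz, Q_zy, Q_yz, Q_zz, foldX', foldY', foldZ',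
        PB.mul_right, PB.add_right, PB.C_right, PB.neg_right, PB.zero_right, PB.one_right,
        Qxx, Qyy, Qxy, Qyx, Qxz, Qzx, Qyz, Qzy, Qzz, QxS2, QyS2, QzS2,
        eq_self_iff_true, ite_true, ite_false, if_true, if_false, mul_zero, zero_mul,
        add_zero, zero_add, neg_zero, neg_neg, sg_self, map_zero, map_one, map_neg, le_refl]
      ring
    · exact absurd h hik
    · simp only [hjk, hik, Ne.symm hik, h.ne, h.ne', h.le,
        eq_false (by omega : ¬ i ≤ k), sg_of_lt h, sg_of_gt h, Q_xx, Q_yy, Q_xy, Q_yx, Q_zx, Q_xz, Q_zy, Q_yz, Q_zz, foldX', foldY', foldZ',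
        PB.mul_right, PB.add_right, PB.C_right, PB.neg_right, PB.zero_right, PB.one_right,
        Qxx, Qyy, Qxy, Qyx, Qxz, Qzx, Qyz, Qzy, Qzz, QxS2, QyS2, QzS2,
        eq_self_iff_true, ite_true, ite_false, if_true, if_false, mul_zero, zero_mul,
        add_zero, zero_add, neg_zero, neg_neg, sg_self, map_zero, map_one, map_neg, le_refl]
      ring
  · simp only [hik, Ne.symm hik, hjk, Ne.symm hjk, Q_xx, Q_yy, Q_xy, Q_yx, Q_zx, Q_xz, Q_zy, Q_yz, Q_zz, foldX', foldY', foldZ',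
        PB.mul_right, PB.add_right, PB.C_right, PB.neg_right, PB.zero_right, PB.one_right,
        Qxx, Qyy, Qxy, Qyx, Qxz, Qzx, Qyz, Qzy, Qzz, QxS2, QyS2, QzS2,
        eq_self_iff_true, ite_true, ite_false, if_true, if_false, mul_zero, zero_mul,
        add_zero, zero_add, neg_zero, neg_neg, sg_self, map_zero, map_one, map_neg, le_refl]
    simp only [sg_antisymm i j, map_neg]
    ring

theorem jq_xyy (i j k : Fin m) : JQ (ix i) (iy j) (iy k) = 0 := by
  unfold JQ
  by_cases hij : i = j <;> by_cases hik : i = k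
  · simp only [hij, hik.symm.trans hij, Q_xx, Q_yy, Q_xy, Q_yx, Q_zx, Q_xz, Q_zy, Q_yz, Q_zz, foldX', foldY', foldZ',
        PB.mul_right, PB.add_right, PB.C_right, PB.neg_right, PB.zero_right, PB.one_right,
        Qxx, Qyy, Qxy, Qyx, Qxz, Qzx, Qyz, Qzy, Qzz, QxS2, QyS2, QzS2,
        eq_self_iff_true, ite_true, ite_false, if_true, if_false, mul_zero, zero_mul,
        add_zero, zero_add, neg_zero, neg_neg, sg_self, map_zero, map_one, map_neg, le_refl]
    ring
  · -- i = j, i ≠ k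
    rcases lt_trichotomy j k with h | h | h
    · simp only [hij, hik, Ne.symm hik, h.ne, h.ne', h.le,
        eq_false (by omega : ¬ k ≤ j), eq_false (by omega : ¬ k ≤ i), (by omega : (i:Fin m) ≤ k),
        sg_of_lt h, sg_of_gt h, (by rw [hij] : sg i k = sg j k),
        (by rw [hij] : sg k i = sg k j), Q_xx, Q_yy, Q_xy, Q_yx, Q_zx, Q_xz, Q_zy, Q_yz, Q_zz, foldX', foldY', foldZ',
        PB.mul_right, PB.add_right, PB.C_right, PB.neg_right, PB.zero_right, PB.one_right,
        Qxx, Qyy, Qxy, Qyx, Qxz, Qzx, Qyz, Qzy, Qzz, QxS2, QyS2, QzS2,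
        eq_self_iff_true, ite_true, ite_false, if_true, if_false, mul_zero, zero_mul,
        add_zero, zero_add, neg_zero, neg_neg, sg_self, map_zero, map_one, map_neg, le_refl]
      ring
    · exact absurd (hij.trans h) hik
    · simp only [hij, hik, Ne.symm hik, h.ne, h.ne', h.le,
        eq_false (by omega : ¬ j ≤ k), eq_false (by omega : ¬ i ≤ k), (by omega : (k:Fin m) ≤ i),
        sg_of_lt h, sg_of_gt h, (by rw [hij] : sg i k = sg j k),
        (by rw [hij] : sg k i = sg k j), Q_xx, Q_yy, Q_xy, Q_yx, Q_zx, Q_xz, Q_zy, Q_yz, Q_zz, foldX', foldY', foldZ',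
        PB.mul_right, PB.add_right, PB.C_right, PB.neg_right, PB.zero_right, PB.one_right,
        Qxx, Qyy, Qxy, Qyx, Qxz, Qzx, Qyz, Qzy, Qzz, QxS2, QyS2, QzS2,
        eq_self_iff_true, ite_true, ite_false, if_true, if_false, mul_zero, zero_mul,
        add_zero, zero_add, neg_zero, neg_neg, sg_self, map_zero, map_one, map_neg, le_refl]
      ring
  · -- i = k, i ≠ j
    rcases lt_trichotomy j k with h | h | h
    · simp only [hik, hij, Ne.symm hij, h.ne, h.ne', h.le,
        eq_false (by omega : ¬ k ≤ j), eq_false (by omega : ¬ i ≤ j), (by omega : (j:Fin m) ≤ i),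
        sg_of_lt h, sg_of_gt h, (by rw [hik] : sg i j = sg k j),
        (by rw [hik] : sg j i = sg j k), Q_xx, Q_yy, Q_xy, Q_yx, Q_zx, Q_xz, Q_zy, Q_yz, Q_zz, foldX', foldY', foldZ',
        PB.mul_right, PB.add_right, PB.C_right, PB.neg_right, PB.zero_right, PB.one_right,
        Qxx, Qyy, Qxy, Qyx, Qxz, Qzx, Qyz, Qzy, Qzz, QxS2, QyS2, QzS2,
        eq_self_iff_true, ite_true, ite_false, if_true, if_false, mul_zero, zero_mul,
        add_zero, zero_add, neg_zero, neg_neg, sg_self, map_zero, map_one, map_neg, le_refl]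
      ring
    · exact absurd (hik.trans h.symm) hij
    · simp only [hik, hij, Ne.symm hij, h.ne, h.ne', h.le,
        eq_false (by omega : ¬ j ≤ k), eq_false (by omega : ¬ j ≤ i), (by omega : (i:Fin m) ≤ j),
        sg_of_lt h, sg_of_gt h, (by rw [hik] : sg i j = sg k j),
        (by rw [hik] : sg j i = sg j k), Q_xx, Q_yy, Q_xy, Q_yx, Q_zx, Q_xz, Q_zy, Q_yz, Q_zz, foldX', foldY', foldZ',
        PB.mul_right, PB.add_right, PB.C_right, PB.neg_right, PB.zero_right, PB.one_right,
        Qxx, Qyy, Qxy, Qyx, Qxz, Qzx, Qyz, Qzy, Qzz, QxS2, QyS2, QzS2,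
        eq_self_iff_true, ite_true, ite_false, if_true, if_false, mul_zero, zero_mul,
        add_zero, zero_add, neg_zero, neg_neg, sg_self, map_zero, map_one, map_neg, le_refl]
      ring
  · simp only [hij, Ne.symm hij, hik, Ne.symm hik, Q_xx, Q_yy, Q_xy, Q_yx, Q_zx, Q_xz, Q_zy, Q_yz, Q_zz, foldX', foldY', foldZ',
        PB.mul_right, PB.add_right, PB.C_right, PB.neg_right, PB.zero_right, PB.one_right,
        Qxx, Qyy, Qxy, Qyx, Qxz, Qzx, Qyz, Qzy, Qzz, QxS2, QyS2, QzS2,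
        eq_self_iff_true, ite_true, ite_false, if_true, if_false, mul_zero, zero_mul,
        add_zero, zero_add, neg_zero, neg_neg, sg_self, map_zero, map_one, map_neg, le_refl]
    simp only [sg_antisymm j k, map_neg]
    ring

theorem jacQ (a b c : Idx m) : JQ a b c = 0 := by
  rcases a with (i | i) | u <;> rcases b with (j | j) | v <;> rcases c with (k | k) | w
  · exact jq_xxx i j k
  · exact jq_xxy i j k
  · exact jq_xxz i j
  · rw [JQ_swap, jq_xxy, neg_zero]
  · exact jq_xyy i j k
  · exact jq_xyz i j
  · rw [JQ_swap, jq_xxz, neg_zero]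
  · rw [JQ_swap, jq_xyz, neg_zero]
  · exact JQ_abb _ _
  · rw [JQ_cyc, jq_xxy]
  · rw [JQ_cyc, jq_xyy]
  · rw [JQ_cyc, JQ_swap, jq_xyz, neg_zero]
  · rw [JQ_cyc, JQ_cyc, jq_xyy]
  · exact jq_yyy i j k
  · exact jq_yyz i j
  · rw [JQ_cyc, JQ_cyc, jq_xyz]
  · rw [JQ_swap, jq_yyz, neg_zero]
  · exact JQ_abb _ _
  · rw [JQ_cyc, jq_xxz]
  · rw [JQ_cyc, jq_xyz]
  · exact JQ_aba _ _
  · rw [JQ_cyc, JQ_cyc, JQ_swap, jq_xyz, neg_zero]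
  · rw [JQ_cyc, jq_yyz]
  · exact JQ_aba _ _
  · exact JQ_aab _ _
  · exact JQ_aab _ _
  · exact JQ_aab _ _

theorem gen_jacobi (a b c : Idx m) :
    PB.J P (X a) (X b) (X c) = 0 := by
  unfold PB.J
  rw [PB.X_X, PB.X_X, PB.X_X]
  rw [PB.smul_eq P ((1:ℂ)/2) P_eq, PB.smul_eq P ((1:ℂ)/2) P_eq,
    PB.smul_eq P ((1:ℂ)/2) P_eq, P_eq b c, P_eq c a, P_eq a b,
    PB.Cmul_right, PB.Cmul_right, PB.Cmul_right]
  have h := jacQ a b c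
  unfold JQ at h
  linear_combination (C ((1:ℂ)/2) * C ((1:ℂ)/2)) * h

end StmtB


/-- For `N ≥ 2`, the bracket on `ℂ[x_2,…,x_N,y_2,…,y_N,z]` determined by
`{x_i,x_j} = (1/2)x_i x_j` (`i<j`), `{y_i,y_j} = -(1/2)y_i y_j` (`i<j`),
`{z,x_i} = -(1/2)z x_i`, `{z,y_i} = (1/2)z y_i`, `{x_i,y_j} = (1/2)x_i y_j` (`i≠j`),
`{x_i,y_i} = -Σ_{l=i+1}^N x_l y_l - (1/2)z²` satisfies the Jacobi identity,
i.e. it is a Poisson bracket (the quasiclassical limit of odd-dimensional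
quantum Euclidean space). -/
theorem jacobi_odd_quantum_euclidean (N : ℕ) (hN : 2 ≤ N)
    (f g h : MvPolynomial (StmtB.Idx (N - 1)) ℂ) :
    polyBracket StmtB.P f (polyBracket StmtB.P g h) +
      polyBracket StmtB.P g (polyBracket StmtB.P h f) +
      polyBracket StmtB.P h (polyBracket StmtB.P f g) = 0 := by
  have := PB.J_eq_zero StmtB.P (fun a b => StmtB.P_antisymm a b) StmtB.gen_jacobi f g h
  simpa [PB.J] using this
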